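/- For all n ≥ 12, the saturation number sat(n, K_{3,3}) is at most 3n - 9. -/

import Mathlib

open SimpleGraph

/-- `G` contains a subgraph isomorphic to `K_{3,3}`. -/
def ContainsK33 {V : Type*} (G : SimpleGraph V) : Prop :=
  ∃ f : Fin 3 ⊕ Fin 3 → V, Function.Injective f ∧
    ∀ a b, (completeBipartiteGraph (Fin 3) (Fin 3)).Adj a b → G.Adj (f a) (f b)

/-- `G` is `K_{3,3}`-saturated. -/
def K33Saturated {V : Type*} (G : SimpleGraph V) : Prop :=
  ¬ ContainsK33 G ∧
    ∀ x y : V, x ≠ y → ¬ G.Adj x y → ContainsK33 (G ⊔ SimpleGraph.edge x y)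

namespace K33Aux

/-- adjacency among the nine special vertices -/
def adj9 (a b : Fin 9) : Bool :=
  let e : List (ℕ × ℕ) := [(0,2),(0,3),(0,4),(0,5),(0,6),(1,2),(1,3),(1,4),(1,5),(1,6),
    (2,3),(3,4),(4,5),(2,5),(7,2),(7,4),(8,3),(8,5)]
  decide ((a.val, b.val) ∈ e) || decide ((b.val, a.val) ∈ e)

abbrev Wk (k : ℕ) := Fin 9 ⊕ ZMod (k+3)

instance instNZ (k : ℕ) : NeZero (k+3) := ⟨by omega⟩

lemma one_ne_zero' (k : ℕ) : (1 : ZMod (k+3)) ≠ 0 := by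
  haveI : Fact (1 < k+3) := ⟨by omega⟩
  exact one_ne_zero

lemma two_ne_zero' (k : ℕ) : (2 : ZMod (k+3)) ≠ 0 := by
  intro h
  have h2 : ((2:ℕ) : ZMod (k+3)) = 0 := by exact_mod_cast h
  rw [ZMod.natCast_eq_zero_iff] at h2
  have := Nat.le_of_dvd (by omega) h2
  omega

lemma adj9_symm : ∀ a b : Fin 9, adj9 a b = true → adj9 b a = true := by decide

lemma adj9_irrefl : ∀ a : Fin 9, ¬ adj9 a a = true := by decide

def GG (k : ℕ) : SimpleGraph (Wk k) where
  Adj x y := match x, y with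
    | .inl a, .inl b => adj9 a b = true
    | .inl a, .inr _ => a = 0 ∨ a = 1
    | .inr _, .inl a => a = 0 ∨ a = 1
    | .inr i, .inr j => j = i + 1 ∨ i = j + 1
  symm := by
    constructor
    rintro (a|i) (b|j) h
    · exact adj9_symm a b h
    · exact h
    · exact h
    · exact h.symm
  loopless := by
    constructor
    rintro (a|i) h
    · exact adj9_irrefl a h
    · rcases h with h | h <;>
      · have : (1 : ZMod (k+3)) = 0 := by
          have := left_eq_add.mp h
          exact this
        exact one_ne_zero' k this

instance (k : ℕ) : DecidableRel ((GG k).Adj) := fun x y =>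
  match x, y with
  | .inl a, .inl b => inferInstanceAs (Decidable (adj9 a b = true))
  | .inl a, .inr _ => inferInstanceAs (Decidable (a = 0 ∨ a = 1))
  | .inr _, .inl a => inferInstanceAs (Decidable (a = 0 ∨ a = 1))
  | .inr i, .inr j => inferInstanceAs (Decidable (j = i + 1 ∨ i = j + 1))

@[simp] lemma GG_ll {k : ℕ} {a b : Fin 9} :
    (GG k).Adj (.inl a) (.inl b) ↔ adj9 a b = true := Iff.rfl
@[simp] lemma GG_lr {k : ℕ} {a : Fin 9} {i : ZMod (k+3)} :
    (GG k).Adj (.inl a) (.inr i) ↔ (a = 0 ∨ a = 1) := Iff.rfl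
@[simp] lemma GG_rl {k : ℕ} {a : Fin 9} {i : ZMod (k+3)} :
    (GG k).Adj (.inr i) (.inl a) ↔ (a = 0 ∨ a = 1) := Iff.rfl
@[simp] lemma GG_rr {k : ℕ} {i j : ZMod (k+3)} :
    (GG k).Adj (.inr i) (.inr j) ↔ (j = i + 1 ∨ i = j + 1) := Iff.rfl



lemma containsK33_of_six {V : Type*} {G : SimpleGraph V} {a0 a1 a2 b0 b1 b2 : V}
    (h01 : a0 ≠ a1) (h02 : a0 ≠ a2) (h12 : a1 ≠ a2)
    (g01 : b0 ≠ b1) (g02 : b0 ≠ b2) (g12 : b1 ≠ b2)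
    (e00 : G.Adj a0 b0) (e01 : G.Adj a0 b1) (e02 : G.Adj a0 b2)
    (e10 : G.Adj a1 b0) (e11 : G.Adj a1 b1) (e12 : G.Adj a1 b2)
    (e20 : G.Adj a2 b0) (e21 : G.Adj a2 b1) (e22 : G.Adj a2 b2) :
    ContainsK33 G := by
  have eAll : ∀ i j : Fin 3, G.Adj (![a0,a1,a2] i) (![b0,b1,b2] j) := by
    intro i j
    fin_cases i <;> fin_cases j <;> assumption
  refine ⟨Sum.elim ![a0,a1,a2] ![b0,b1,b2], ?_, ?_⟩
  · rintro (i|i) (j|j) h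
    · simp only [Sum.elim_inl] at h
      congr 1
      fin_cases i <;> fin_cases j <;> simp_all
    · exact absurd h (by simpa using (eAll i j).ne)
    · exact absurd h (by simpa using (eAll j i).ne')
    · simp only [Sum.elim_inr] at h
      congr 1
      fin_cases i <;> fin_cases j <;> simp_all
  · rintro (i|i) (j|j) h
    · simp at h
    · exact eAll i j
    · exact (eAll j i).symm
    · simp at h



lemma edge_comm' {V : Type*} (x y : V) : SimpleGraph.edge x y = SimpleGraph.edge y x := by
  unfold SimpleGraph.edge
  rw [Sym2.eq_swap]

lemma inl_ne_inr {k : ℕ} (a : Fin 9) (i : ZMod (k+3)) : (Sum.inl a : Wk k) ≠ Sum.inr i := by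
  simp

/-- the generic saturation witness: `x` adjacent to both hubs, `q1 q2` adjacent to `y`
and to both hubs. -/
lemma case3 {k : ℕ} (x y q1 q2 : Wk k)
    (hx0 : (GG k).Adj x (.inl 0)) (hx1 : (GG k).Adj x (.inl 1))
    (hq1y : (GG k).Adj q1 y) (hq2y : (GG k).Adj q2 y)
    (hq10 : (GG k).Adj q1 (.inl 0)) (hq11 : (GG k).Adj q1 (.inl 1))
    (hq20 : (GG k).Adj q2 (.inl 0)) (hq21 : (GG k).Adj q2 (.inl 1))
    (hxy : x ≠ y) (hxq1 : x ≠ q1) (hxq2 : x ≠ q2) (hq12 : q1 ≠ q2)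
    (hy0 : y ≠ .inl 0) (hy1 : y ≠ .inl 1) :
    ContainsK33 ((GG k) ⊔ SimpleGraph.edge x y) := by
  have hne01 : (Sum.inl 0 : Wk k) ≠ Sum.inl 1 := by simp
  apply containsK33_of_six (a0 := x) (a1 := q1) (a2 := q2)
    (b0 := y) (b1 := .inl 0) (b2 := .inl 1)
    hxq1 hxq2 hq12 hy0 hy1 hne01
  · exact Or.inr (by rw [SimpleGraph.edge_adj]; exact ⟨Or.inl ⟨rfl, rfl⟩, hxy⟩)
  · exact Or.inl hx0
  · exact Or.inl hx1
  · exact Or.inl hq1y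
  · exact Or.inl hq10
  · exact Or.inl hq11
  · exact Or.inl hq2y
  · exact Or.inl hq20
  · exact Or.inl hq21

/-- saturation witness for non-edges among the nine special vertices. -/
lemma satInl {k : ℕ} (p1 p2 r1 r2 : Fin 9) {a b : Fin 9}
    (h : (adj9 a r1 && adj9 a r2 && adj9 p1 b && adj9 p2 b &&
          adj9 p1 r1 && adj9 p1 r2 && adj9 p2 r1 && adj9 p2 r2 &&
          !(a == b) && !(a == p1) && !(a == p2) && !(p1 == p2) &&
          !(b == r1) && !(b == r2) && !(r1 == r2)) = true) :
    ContainsK33 ((GG k) ⊔ SimpleGraph.edge (Sum.inl a : Wk k) (Sum.inl b)) := by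
  simp only [Bool.and_eq_true, beq_iff_eq, Bool.not_eq_true', beq_eq_false_iff_ne, ne_eq] at h
  obtain ⟨⟨⟨⟨⟨⟨⟨⟨⟨⟨⟨⟨⟨⟨har1, har2⟩, hp1b⟩, hp2b⟩, hp1r1⟩, hp1r2⟩, hp2r1⟩, hp2r2⟩,
    hab⟩, hap1⟩, hap2⟩, hp12⟩, hbr1⟩, hbr2⟩, hr12⟩ := h
  have inj : ∀ u v : Fin 9, u ≠ v → (Sum.inl u : Wk k) ≠ Sum.inl v := by
    intro u v huv h; exact huv (Sum.inl_injective h)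
  apply containsK33_of_six (a0 := (Sum.inl a : Wk k)) (a1 := .inl p1) (a2 := .inl p2)
    (b0 := .inl b) (b1 := .inl r1) (b2 := .inl r2)
    (inj _ _ hap1) (inj _ _ hap2) (inj _ _ hp12)
    (inj _ _ hbr1) (inj _ _ hbr2) (inj _ _ hr12)
  · exact Or.inr (by rw [SimpleGraph.edge_adj]; exact ⟨Or.inl ⟨rfl, rfl⟩, inj _ _ hab⟩)
  · exact Or.inl har1
  · exact Or.inl har2
  · exact Or.inl hp1b
  · exact Or.inl hp1r1
  · exact Or.inl hp1r2
  · exact Or.inl hp2b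
  · exact Or.inl hp2r1
  · exact Or.inl hp2r2

lemma sub_one_adj {k : ℕ} (j : ZMod (k+3)) : (GG k).Adj (.inr (j-1)) (.inr j) := by
  rw [GG_rr]
  left
  ring

lemma add_one_ne_sub_one {k : ℕ} (j : ZMod (k+3)) : j + 1 ≠ j - 1 := by
  intro h
  apply two_ne_zero' k
  have : j + 1 - (j - 1) = 0 := by rw [h]; ring
  calc (2 : ZMod (k+3)) = j + 1 - (j - 1) := by ring
  _ = 0 := this

lemma satGG {k : ℕ} : ∀ x y : Wk k, x ≠ y → ¬ (GG k).Adj x y →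
    ContainsK33 ((GG k) ⊔ SimpleGraph.edge x y) := by
  have adj01 : ∀ (a : Fin 9), (a = 0 ∨ a = 1) → ∀ i : ZMod (k+3), (GG k).Adj (.inr i) (.inl a) :=
    fun a ha i => ha
  rintro (a|i) (b|j) hne hnadj
  · -- inl/inl
    have hne' : a ≠ b := fun h => hne (by rw [h])
    have hnadj' : ¬ adj9 a b = true := hnadj
    clear hne hnadj
    revert hne' hnadj'
    fin_cases a <;> fin_cases b <;> intro hne' hnadj' <;>
      first
        | exact absurd rfl hne'
        | exact absurd (by decide) hnadj'
        | exact satInl 3 5 2 4 (by decide)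
        | exact satInl 2 4 3 5 (by decide)
        | exact satInl 0 1 3 5 (by decide)
        | exact satInl 0 1 2 4 (by decide)
        | exact satInl 3 5 0 1 (by decide)
        | exact satInl 2 4 0 1 (by decide)
  · -- inl a / inr j
    have ha : ¬ (a = 0 ∨ a = 1) := hnadj
    rw [edge_comm']
    -- x := inr j is adjacent to hubs; y := inl a
    by_cases h6 : a = 6
    · subst h6
      rw [edge_comm']
      -- x := inl 6, y := inr j, q1 := inr (j+1), q2 := inr (j-1)
      apply case3 (.inl 6) (.inr j) (.inr (j+1)) (.inr (j-1))
      · exact (by decide : adj9 6 0 = true)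
      · exact (by decide : adj9 6 1 = true)
      · exact Or.inr rfl
      · exact sub_one_adj j
      · exact Or.inl rfl
      · exact Or.inr rfl
      · exact Or.inl rfl
      · exact Or.inr rfl
      · exact inl_ne_inr _ _
      · exact inl_ne_inr _ _
      · exact inl_ne_inr _ _
      · intro h
        exact add_one_ne_sub_one j (Sum.inr_injective h)
      · intro h
        exact inl_ne_inr _ _ h.symm
      · intro h
        exact inl_ne_inr _ _ h.symm
    · -- a ∈ {2,3,4,5,7,8}: q's from the table
      have hmem : (a = 2 ∨ a = 4 ∨ a = 8) ∨ (a = 3 ∨ a = 5 ∨ a = 7) := by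
        clear hne hnadj
        revert ha h6
        revert a
        decide
      have main : ∀ q1 q2 : Fin 9, adj9 q1 a = true → adj9 q2 a = true →
          adj9 q1 0 = true → adj9 q1 1 = true → adj9 q2 0 = true → adj9 q2 1 = true →
          q1 ≠ q2 →
          ContainsK33 ((GG k) ⊔ SimpleGraph.edge (Sum.inr j : Wk k) (.inl a)) := by
        intro q1 q2 h1 h2 h3 h4 h5 h6' hq
        apply case3 (.inr j) (.inl a) (.inl q1) (.inl q2)
        · exact Or.inl rfl
        · exact Or.inr rfl
        · exact h1
        · exact h2
        · exact h3
        · exact h4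
        · exact h5
        · exact h6'
        · exact fun h => inl_ne_inr _ _ h.symm
        · exact fun h => inl_ne_inr _ _ h.symm
        · exact fun h => inl_ne_inr _ _ h.symm
        · exact fun h => hq (Sum.inl_injective h)
        · exact fun h => ha (Or.inl (Sum.inl_injective h))
        · exact fun h => ha (Or.inr (Sum.inl_injective h))
      rcases hmem with h | h
      ·
        apply main 3 5 <;> first | (rcases h with rfl|rfl|rfl <;> decide) | decide
      · apply main 2 4 <;> first | (rcases h with rfl|rfl|rfl <;> decide) | decide
  · -- inr i / inl b : symmetric
    have hb : ¬ (b = 0 ∨ b = 1) := hnadj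
    by_cases h6 : b = 6
    · subst h6
      rw [edge_comm']
      apply case3 (.inl 6) (.inr i) (.inr (i+1)) (.inr (i-1))
      · exact (by decide : adj9 6 0 = true)
      · exact (by decide : adj9 6 1 = true)
      · exact Or.inr rfl
      · exact sub_one_adj i
      · exact Or.inl rfl
      · exact Or.inr rfl
      · exact Or.inl rfl
      · exact Or.inr rfl
      · exact inl_ne_inr _ _
      · exact inl_ne_inr _ _
      · exact inl_ne_inr _ _
      · exact fun h => add_one_ne_sub_one i (Sum.inr_injective h)
      · exact fun h => inl_ne_inr _ _ h.symm
      · exact fun h => inl_ne_inr _ _ h.symm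
    · have hmem : (b = 2 ∨ b = 4 ∨ b = 8) ∨ (b = 3 ∨ b = 5 ∨ b = 7) := by
        clear hne hnadj
        revert hb h6
        revert b
        decide
      have main : ∀ q1 q2 : Fin 9, adj9 q1 b = true → adj9 q2 b = true →
          adj9 q1 0 = true → adj9 q1 1 = true → adj9 q2 0 = true → adj9 q2 1 = true →
          q1 ≠ q2 →
          ContainsK33 ((GG k) ⊔ SimpleGraph.edge (Sum.inr i : Wk k) (.inl b)) := by
        intro q1 q2 h1 h2 h3 h4 h5 h6' hq
        apply case3 (.inr i) (.inl b) (.inl q1) (.inl q2)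
        · exact Or.inl rfl
        · exact Or.inr rfl
        · exact h1
        · exact h2
        · exact h3
        · exact h4
        · exact h5
        · exact h6'
        · exact fun h => inl_ne_inr _ _ h.symm
        · exact fun h => inl_ne_inr _ _ h.symm
        · exact fun h => inl_ne_inr _ _ h.symm
        · exact fun h => hq (Sum.inl_injective h)
        · exact fun h => hb (Or.inl (Sum.inl_injective h))
        · exact fun h => hb (Or.inr (Sum.inl_injective h))
      rcases hmem with h | h
      · apply main 3 5 <;> first | (rcases h with rfl|rfl|rfl <;> decide) | decide
      · apply main 2 4 <;> first | (rcases h with rfl|rfl|rfl <;> decide) | decide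
  · -- inr/inr
    have hij : i ≠ j := fun h => hne (by rw [h])
    have hnadj' : ¬ (j = i + 1 ∨ i = j + 1) := hnadj
    push_neg at hnadj'
    apply case3 (.inr i) (.inr j) (.inr (j+1)) (.inr (j-1))
    · exact Or.inl rfl
    · exact Or.inr rfl
    · exact Or.inr rfl
    · exact sub_one_adj j
    · exact Or.inl rfl
    · exact Or.inr rfl
    · exact Or.inl rfl
    · exact Or.inr rfl
    · exact fun h => hij (Sum.inr_injective h)
    · exact fun h => hnadj'.2 (Sum.inr_injective h)
    · intro h
      apply hnadj'.1
      have := Sum.inr_injective h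
      rw [this]
      ring
    · exact fun h => add_one_ne_sub_one j (Sum.inr_injective h)
    · exact fun h => inl_ne_inr _ _ h.symm
    · exact fun h => inl_ne_inr _ _ h.symm

section Freeness

variable {k : ℕ}

lemma nbr6 {t : Wk k} (h : (GG k).Adj (.inl 6) t) : t = .inl 0 ∨ t = .inl 1 := by
  rcases t with b | i
  · have : b = 0 ∨ b = 1 := by
      revert h
      rw [GG_ll]
      revert b
      decide
    rcases this with rfl | rfl
    · exact Or.inl rfl
    · exact Or.inr rfl
  · rw [GG_lr] at h
    rcases h with h | h <;> exact absurd h (by decide)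

lemma nbr7 {t : Wk k} (h : (GG k).Adj (.inl 7) t) : t = .inl 2 ∨ t = .inl 4 := by
  rcases t with b | i
  · have : b = 2 ∨ b = 4 := by
      revert h
      rw [GG_ll]
      revert b
      decide
    rcases this with rfl | rfl
    · exact Or.inl rfl
    · exact Or.inr rfl
  · rw [GG_lr] at h
    rcases h with h | h <;> exact absurd h (by decide)

lemma nbr8 {t : Wk k} (h : (GG k).Adj (.inl 8) t) : t = .inl 3 ∨ t = .inl 5 := by
  rcases t with b | i
  · have : b = 3 ∨ b = 5 := by
      revert h
      rw [GG_ll]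
      revert b
      decide
    rcases this with rfl | rfl
    · exact Or.inl rfl
    · exact Or.inr rfl
  · rw [GG_lr] at h
    rcases h with h | h <;> exact absurd h (by decide)

/-- neighbors of a C4 vertex, among the special vertices -/
lemma nbrC4 {c : Fin 9} (hc : c = 2 ∨ c = 3 ∨ c = 4 ∨ c = 5) {t : Wk k}
    (h : (GG k).Adj (.inl c) t) :
    ∃ b : Fin 9, t = .inl b := by
  rcases t with b | i
  · exact ⟨b, rfl⟩
  · rw [GG_lr] at h
    rcases hc with rfl | rfl | rfl | rfl <;> rcases h with h | h <;> exact absurd h (by decide)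

lemma nbrHub {a : Fin 9} (ha : a = 0 ∨ a = 1) {t : Wk k} (h : (GG k).Adj (.inl a) t) :
    t ≠ .inl 0 ∧ t ≠ .inl 1 ∧ t ≠ .inl 7 ∧ t ≠ .inl 8 := by
  rcases t with b | i
  · have : ¬(b = 0 ∨ b = 1 ∨ b = 7 ∨ b = 8) := by
      revert h
      rw [GG_ll]
      rcases ha with rfl | rfl <;> · revert b; decide
    refine ⟨fun hh => this (Or.inl (Sum.inl_injective hh)),
      fun hh => this (Or.inr (Or.inl (Sum.inl_injective hh))),
      fun hh => this (Or.inr (Or.inr (Or.inl (Sum.inl_injective hh)))),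
      fun hh => this (Or.inr (Or.inr (Or.inr (Sum.inl_injective hh))))⟩
  · exact ⟨fun hh => inl_ne_inr _ _ hh.symm, fun hh => inl_ne_inr _ _ hh.symm,
      fun hh => inl_ne_inr _ _ hh.symm, fun hh => inl_ne_inr _ _ hh.symm⟩

lemma nbrInr {e : ZMod (k+3)} {t : Wk k} (h : (GG k).Adj (.inr e) t) :
    t = .inl 0 ∨ t = .inl 1 ∨ t = .inr (e+1) ∨ t = .inr (e-1) := by
  rcases t with b | j
  · rw [GG_rl] at h
    rcases h with rfl | rfl
    · exact Or.inl rfl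
    · exact Or.inr (Or.inl rfl)
  · rw [GG_rr] at h
    rcases h with h | h
    · exact Or.inr (Or.inr (Or.inl (by rw [h])))
    · refine Or.inr (Or.inr (Or.inr ?_))
      have : j = e - 1 := by rw [h]; ring
      rw [this]

lemma pigeon {α : Type*} {x y z u v : α} (hxy : x ≠ y) (hxz : x ≠ z) (hyz : y ≠ z)
    (hx : x = u ∨ x = v) (hy : y = u ∨ y = v) (hz : z = u ∨ z = v) : False := by
  rcases hx with rfl | rfl <;> rcases hy with rfl | rfl <;> rcases hz with rfl | rfl <;>
    simp_all

lemma nbr24 {c : Fin 9} (hc : c = 2 ∨ c = 4) {t : Wk k} (h : (GG k).Adj (.inl c) t) :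
    t = .inl 0 ∨ t = .inl 1 ∨ t = .inl 3 ∨ t = .inl 5 ∨ t = .inl 7 := by
  rcases t with b | i
  · have : b = 0 ∨ b = 1 ∨ b = 3 ∨ b = 5 ∨ b = 7 := by
      revert h; rw [GG_ll]; rcases hc with rfl | rfl <;> · revert b; decide
    rcases this with rfl|rfl|rfl|rfl|rfl
    exacts [Or.inl rfl, Or.inr (Or.inl rfl), Or.inr (Or.inr (Or.inl rfl)),
      Or.inr (Or.inr (Or.inr (Or.inl rfl))), Or.inr (Or.inr (Or.inr (Or.inr rfl)))]
  · rw [GG_lr] at h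
    rcases hc with rfl | rfl <;> rcases h with h | h <;> exact absurd h (by decide)

lemma nbr35 {c : Fin 9} (hc : c = 3 ∨ c = 5) {t : Wk k} (h : (GG k).Adj (.inl c) t) :
    t = .inl 0 ∨ t = .inl 1 ∨ t = .inl 2 ∨ t = .inl 4 ∨ t = .inl 8 := by
  rcases t with b | i
  · have : b = 0 ∨ b = 1 ∨ b = 2 ∨ b = 4 ∨ b = 8 := by
      revert h; rw [GG_ll]; rcases hc with rfl | rfl <;> · revert b; decide
    rcases this with rfl|rfl|rfl|rfl|rfl
    exacts [Or.inl rfl, Or.inr (Or.inl rfl), Or.inr (Or.inr (Or.inl rfl)),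
      Or.inr (Or.inr (Or.inr (Or.inl rfl))), Or.inr (Or.inr (Or.inr (Or.inr rfl)))]
  · rw [GG_lr] at h
    rcases hc with rfl | rfl <;> rcases h with h | h <;> exact absurd h (by decide)

/-- no vertex with three distinct neighbours is one of the low-degree vertices 6, 7, 8 -/
lemma notLow {v t1 t2 t3 : Wk k} (h1 : (GG k).Adj v t1) (h2 : (GG k).Adj v t2)
    (h3 : (GG k).Adj v t3) (d12 : t1 ≠ t2) (d13 : t1 ≠ t3) (d23 : t2 ≠ t3) :
    v ≠ .inl 6 ∧ v ≠ .inl 7 ∧ v ≠ .inl 8 := by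
  refine ⟨?_, ?_, ?_⟩ <;> rintro rfl
  · exact pigeon d12 d13 d23 (nbr6 h1) (nbr6 h2) (nbr6 h3)
  · exact pigeon d12 d13 d23 (nbr7 h1) (nbr7 h2) (nbr7 h3)
  · exact pigeon d12 d13 d23 (nbr8 h1) (nbr8 h2) (nbr8 h3)

lemma freeGG {k : ℕ} : ¬ ContainsK33 (GG k) := by
  rintro ⟨f, finj, fadj⟩
  set A : Fin 3 → Wk k := fun i => f (.inl i) with hA
  set B : Fin 3 → Wk k := fun j => f (.inr j) with hB
  have hab : ∀ i j, (GG k).Adj (A i) (B j) := fun i j => fadj _ _ (by simp)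
  have hAne : ∀ i j : Fin 3, i ≠ j → A i ≠ A j := by
    intro i j hij h
    exact hij (Sum.inl_injective (finj h))
  have hBne : ∀ i j : Fin 3, i ≠ j → B i ≠ B j := by
    intro i j hij h
    exact hij (Sum.inr_injective (finj h))
  -- find a non-hub vertex among the A's
  have hex : ∃ i, A i ≠ .inl 0 ∧ A i ≠ .inl 1 := by
    by_contra hc
    push_neg at hc
    have hmem : ∀ i, A i = .inl 0 ∨ A i = .inl 1 := by
      intro i
      by_cases h0 : A i = .inl 0
      · exact Or.inl h0
      · exact Or.inr (hc i h0)
    exact pigeon (hAne 0 1 (by decide)) (hAne 0 2 (by decide)) (hAne 1 2 (by decide))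
      (hmem 0) (hmem 1) (hmem 2)
  obtain ⟨i0, hs0, hs1⟩ := hex
  have hsLow := notLow (hab i0 0) (hab i0 1) (hab i0 2)
    (hBne 0 1 (by decide)) (hBne 0 2 (by decide)) (hBne 1 2 (by decide))
  have hbLow : ∀ j, B j ≠ .inl 6 ∧ B j ≠ .inl 7 ∧ B j ≠ .inl 8 := by
    intro j
    exact notLow (hab 0 j).symm (hab 1 j).symm (hab 2 j).symm
      (hAne 0 1 (by decide)) (hAne 0 2 (by decide)) (hAne 1 2 (by decide))
  -- case analysis on the non-hub vertex A i0
  rcases hsplit : A i0 with c | si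
  · -- A i0 = inl c with c ∈ {2,3,4,5}
    have hc0 : c ≠ 0 := fun e => hs0 (by rw [hsplit, e])
    have hc1 : c ≠ 1 := fun e => hs1 (by rw [hsplit, e])
    have hc6 : c ≠ 6 := fun e => hsLow.1 (by rw [hsplit, e])
    have hc7 : c ≠ 7 := fun e => hsLow.2.1 (by rw [hsplit, e])
    have hc8 : c ≠ 8 := fun e => hsLow.2.2 (by rw [hsplit, e])
    have hcc : (c = 2 ∨ c = 4) ∨ (c = 3 ∨ c = 5) := by
      have h9 := c.isLt
      have v0 : c.val ≠ 0 := fun e => hc0 (Fin.ext e)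
      have v1 : c.val ≠ 1 := fun e => hc1 (Fin.ext e)
      have v6 : c.val ≠ 6 := fun e => hc6 (Fin.ext e)
      have v7 : c.val ≠ 7 := fun e => hc7 (Fin.ext e)
      have v8 : c.val ≠ 8 := fun e => hc8 (Fin.ext e)
      have hv : c.val = 2 ∨ c.val = 4 ∨ c.val = 3 ∨ c.val = 5 := by omega
      rcases hv with e|e|e|e
      · exact Or.inl (Or.inl (Fin.ext e))
      · exact Or.inl (Or.inr (Fin.ext e))
      · exact Or.inr (Or.inl (Fin.ext e))
      · exact Or.inr (Or.inr (Fin.ext e))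
    have habs : ∀ j, (GG k).Adj (.inl c) (B j) := fun j => hsplit ▸ hab i0 j
    rcases hcc with hcc | hcc
    · -- c ∈ {2,4}: B's in {0,1,3,5}
      have hBmem : ∀ j, (B j = .inl 0 ∨ B j = .inl 1) ∨ (B j = .inl 3 ∨ B j = .inl 5) := by
        intro j
        rcases nbr24 hcc (habs j) with e|e|e|e|e
        · exact Or.inl (Or.inl e)
        · exact Or.inl (Or.inr e)
        · exact Or.inr (Or.inl e)
        · exact Or.inr (Or.inr e)
        · exact absurd e (hbLow j).2.1
      have hhub : ∃ jh, B jh = .inl 0 ∨ B jh = .inl 1 := by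
        by_contra hcn
        push_neg at hcn
        have : ∀ j, B j = .inl 3 ∨ B j = .inl 5 := fun j => (hBmem j).resolve_left (not_or.mpr (hcn j))
        exact pigeon (hBne 0 1 (by decide)) (hBne 0 2 (by decide)) (hBne 1 2 (by decide))
          (this 0) (this 1) (this 2)
      have hodd : ∃ jo, B jo = .inl 3 ∨ B jo = .inl 5 := by
        by_contra hcn
        push_neg at hcn
        have : ∀ j, B j = .inl 0 ∨ B j = .inl 1 := fun j => (hBmem j).resolve_right (not_or.mpr (hcn j))
        exact pigeon (hBne 0 1 (by decide)) (hBne 0 2 (by decide)) (hBne 1 2 (by decide))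
          (this 0) (this 1) (this 2)
      obtain ⟨jh, hjh⟩ := hhub
      obtain ⟨jo, hjo⟩ := hodd
      have hAmem : ∀ i, A i = .inl 2 ∨ A i = .inl 4 := by
        intro i
        have h1 : (GG k).Adj (B jo) (A i) := (hab i jo).symm
        have h2 : (GG k).Adj (B jh) (A i) := (hab i jh).symm
        have hBo : B jo = .inl 3 ∨ B jo = .inl 5 := hjo
        have hne' : A i ≠ .inl 0 ∧ A i ≠ .inl 1 ∧ A i ≠ .inl 7 ∧ A i ≠ .inl 8 := by
          rcases hjh with e|e <;> rw [e] at h2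
          · exact nbrHub (Or.inl rfl) h2
          · exact nbrHub (Or.inr rfl) h2
        have hmem5 : A i = .inl 0 ∨ A i = .inl 1 ∨ A i = .inl 2 ∨ A i = .inl 4 ∨ A i = .inl 8 := by
          rcases hBo with e|e <;> rw [e] at h1
          · exact nbr35 (Or.inl rfl) h1
          · exact nbr35 (Or.inr rfl) h1
        rcases hmem5 with e|e|e|e|e
        · exact absurd e hne'.1
        · exact absurd e hne'.2.1
        · exact Or.inl e
        · exact Or.inr e
        · exact absurd e hne'.2.2.2
      exact pigeon (hAne 0 1 (by decide)) (hAne 0 2 (by decide)) (hAne 1 2 (by decide))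
        (hAmem 0) (hAmem 1) (hAmem 2)
    · -- c ∈ {3,5}: B's in {0,1,2,4}
      have hBmem : ∀ j, (B j = .inl 0 ∨ B j = .inl 1) ∨ (B j = .inl 2 ∨ B j = .inl 4) := by
        intro j
        rcases nbr35 hcc (habs j) with e|e|e|e|e
        · exact Or.inl (Or.inl e)
        · exact Or.inl (Or.inr e)
        · exact Or.inr (Or.inl e)
        · exact Or.inr (Or.inr e)
        · exact absurd e (hbLow j).2.2
      have hhub : ∃ jh, B jh = .inl 0 ∨ B jh = .inl 1 := by
        by_contra hcn
        push_neg at hcn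
        have : ∀ j, B j = .inl 2 ∨ B j = .inl 4 := fun j => (hBmem j).resolve_left (not_or.mpr (hcn j))
        exact pigeon (hBne 0 1 (by decide)) (hBne 0 2 (by decide)) (hBne 1 2 (by decide))
          (this 0) (this 1) (this 2)
      have hodd : ∃ jo, B jo = .inl 2 ∨ B jo = .inl 4 := by
        by_contra hcn
        push_neg at hcn
        have : ∀ j, B j = .inl 0 ∨ B j = .inl 1 := fun j => (hBmem j).resolve_right (not_or.mpr (hcn j))
        exact pigeon (hBne 0 1 (by decide)) (hBne 0 2 (by decide)) (hBne 1 2 (by decide))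
          (this 0) (this 1) (this 2)
      obtain ⟨jh, hjh⟩ := hhub
      obtain ⟨jo, hjo⟩ := hodd
      have hAmem : ∀ i, A i = .inl 3 ∨ A i = .inl 5 := by
        intro i
        have h1 : (GG k).Adj (B jo) (A i) := (hab i jo).symm
        have h2 : (GG k).Adj (B jh) (A i) := (hab i jh).symm
        have hne' : A i ≠ .inl 0 ∧ A i ≠ .inl 1 ∧ A i ≠ .inl 7 ∧ A i ≠ .inl 8 := by
          rcases hjh with e|e <;> rw [e] at h2
          · exact nbrHub (Or.inl rfl) h2
          · exact nbrHub (Or.inr rfl) h2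
        have hmem5 : A i = .inl 0 ∨ A i = .inl 1 ∨ A i = .inl 3 ∨ A i = .inl 5 ∨ A i = .inl 7 := by
          rcases hjo with e|e <;> rw [e] at h1
          · exact nbr24 (Or.inl rfl) h1
          · exact nbr24 (Or.inr rfl) h1
        rcases hmem5 with e|e|e|e|e
        · exact absurd e hne'.1
        · exact absurd e hne'.2.1
        · exact Or.inl e
        · exact Or.inr e
        · exact absurd e hne'.2.2.1
      exact pigeon (hAne 0 1 (by decide)) (hAne 0 2 (by decide)) (hAne 1 2 (by decide))
        (hAmem 0) (hAmem 1) (hAmem 2)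
  · -- A i0 = inr si
    have habs : ∀ j, (GG k).Adj (.inr si) (B j) := fun j => hsplit ▸ hab i0 j
    have hBmem : ∀ j, (B j = .inl 0 ∨ B j = .inl 1) ∨
        (B j = .inr (si+1) ∨ B j = .inr (si-1)) := by
      intro j
      rcases nbrInr (habs j) with e|e|e|e
      · exact Or.inl (Or.inl e)
      · exact Or.inl (Or.inr e)
      · exact Or.inr (Or.inl e)
      · exact Or.inr (Or.inr e)
    have hhub : ∃ jh, B jh = .inl 0 ∨ B jh = .inl 1 := by
      by_contra hcn
      push_neg at hcn
      have : ∀ j, B j = .inr (si+1) ∨ B j = .inr (si-1) :=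
        fun j => (hBmem j).resolve_left (not_or.mpr (hcn j))
      exact pigeon (hBne 0 1 (by decide)) (hBne 0 2 (by decide)) (hBne 1 2 (by decide))
        (this 0) (this 1) (this 2)
    have hodd : ∃ jo, B jo = .inr (si+1) ∨ B jo = .inr (si-1) := by
      by_contra hcn
      push_neg at hcn
      have : ∀ j, B j = .inl 0 ∨ B j = .inl 1 := fun j => (hBmem j).resolve_right (not_or.mpr (hcn j))
      exact pigeon (hBne 0 1 (by decide)) (hBne 0 2 (by decide)) (hBne 1 2 (by decide))
        (this 0) (this 1) (this 2)
    obtain ⟨jh, hjh⟩ := hhub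
    obtain ⟨jo, hjo⟩ := hodd
    obtain ⟨e, he⟩ : ∃ e : ZMod (k+3), B jo = .inr e := by
      rcases hjo with h | h
      · exact ⟨si+1, h⟩
      · exact ⟨si-1, h⟩
    have hAmem : ∀ i, A i = .inr (e+1) ∨ A i = .inr (e-1) := by
      intro i
      have h1 : (GG k).Adj (B jo) (A i) := (hab i jo).symm
      rw [he] at h1
      have h2 : (GG k).Adj (B jh) (A i) := (hab i jh).symm
      have hne' : A i ≠ .inl 0 ∧ A i ≠ .inl 1 ∧ A i ≠ .inl 7 ∧ A i ≠ .inl 8 := by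
        rcases hjh with e'|e' <;> rw [e'] at h2
        · exact nbrHub (Or.inl rfl) h2
        · exact nbrHub (Or.inr rfl) h2
      rcases nbrInr h1 with e'|e'|e'|e'
      · exact absurd e' hne'.1
      · exact absurd e' hne'.2.1
      · exact Or.inl e'
      · exact Or.inr e'
    exact pigeon (hAne 0 1 (by decide)) (hAne 0 2 (by decide)) (hAne 1 2 (by decide))
      (hAmem 0) (hAmem 1) (hAmem 2)

end Freeness
section Count

/-- the special part of the graph, as a graph on `Fin 9` -/
def G9 : SimpleGraph (Fin 9) where
  Adj a b := adj9 a b = true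
  symm := ⟨fun a b h => adj9_symm a b h⟩
  loopless := ⟨fun a h => adj9_irrefl a h⟩

instance : DecidableRel G9.Adj := fun a b => inferInstanceAs (Decidable (adj9 a b = true))

lemma G9_card : G9.edgeFinset.card = 18 := by decide

lemma edgeSet_sub (k : ℕ) : (GG k).edgeSet ⊆
    (Sym2.map (Sum.inl : Fin 9 → Wk k) '' G9.edgeSet) ∪
    (Set.range fun i : ZMod (k+3) => s(Sum.inl 0, (Sum.inr i : Wk k))) ∪
    (Set.range fun i : ZMod (k+3) => s(Sum.inl 1, (Sum.inr i : Wk k))) ∪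
    (Set.range fun i : ZMod (k+3) => s((Sum.inr i : Wk k), Sum.inr (i+1))) := by
  intro e he
  induction e with
  | _ x y =>
    rw [SimpleGraph.mem_edgeSet] at he
    rcases x with a | i <;> rcases y with b | j
    · refine Or.inl (Or.inl (Or.inl ⟨s(a, b), ?_, ?_⟩))
      · exact (SimpleGraph.mem_edgeSet _).mpr he
      · rw [Sym2.map_pair_eq]
    · rw [GG_lr] at he
      rcases he with rfl | rfl
      · exact Or.inl (Or.inl (Or.inr ⟨j, rfl⟩))
      · exact Or.inl (Or.inr ⟨j, rfl⟩)
    · rw [GG_rl] at he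
      rw [Sym2.eq_swap]
      rcases he with rfl | rfl
      · exact Or.inl (Or.inl (Or.inr ⟨i, rfl⟩))
      · exact Or.inl (Or.inr ⟨i, rfl⟩)
    · rw [GG_rr] at he
      rcases he with rfl | rfl
      · exact Or.inr ⟨i, rfl⟩
      · rw [Sym2.eq_swap]
        exact Or.inr ⟨j, rfl⟩

lemma range_ncard_le {k : ℕ} {β : Type*} (f : ZMod (k+3) → β) :
    (Set.range f).ncard ≤ k + 3 := by
  rw [← Set.image_univ]
  calc (f '' Set.univ).ncard ≤ (Set.univ : Set (ZMod (k+3))).ncard :=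
        Set.ncard_image_le (Set.toFinite _)
  _ = k + 3 := by
      rw [Set.ncard_univ, Nat.card_eq_fintype_card, ZMod.card]

lemma count_GG (k : ℕ) : (GG k).edgeSet.ncard ≤ 3 * k + 27 := by
  have h := Set.ncard_le_ncard (edgeSet_sub k) (Set.toFinite _)
  refine h.trans ?_
  have b1 : (Sym2.map (Sum.inl : Fin 9 → Wk k) '' G9.edgeSet).ncard ≤ 18 := by
    calc (Sym2.map (Sum.inl : Fin 9 → Wk k) '' G9.edgeSet).ncard ≤ G9.edgeSet.ncard :=
          Set.ncard_image_le (Set.toFinite _)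
    _ = 18 := by
        rw [← SimpleGraph.coe_edgeFinset, Set.ncard_coe_finset, G9_card]
  calc ((Sym2.map (Sum.inl : Fin 9 → Wk k) '' G9.edgeSet) ∪ _ ∪ _ ∪ _).ncard
      ≤ ((Sym2.map (Sum.inl : Fin 9 → Wk k) '' G9.edgeSet) ∪ _ ∪ _).ncard + _ :=
        Set.ncard_union_le _ _
  _ ≤ (((Sym2.map (Sum.inl : Fin 9 → Wk k) '' G9.edgeSet) ∪ _).ncard + _) + _ := by
        gcongr
        exact Set.ncard_union_le _ _
  _ ≤ (((Sym2.map (Sum.inl : Fin 9 → Wk k) '' G9.edgeSet).ncard + _) + _) + _ := by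
        gcongr
        exact Set.ncard_union_le _ _
  _ ≤ ((18 + (k+3)) + (k+3)) + (k+3) :=
        add_le_add (add_le_add (add_le_add b1 (range_ncard_le _)) (range_ncard_le _))
          (range_ncard_le _)
  _ ≤ 3 * k + 27 := by omega

end Count

lemma containsK33_map {V V' : Type*} {G : SimpleGraph V} {G' : SimpleGraph V'}
    (φ : V → V') (hinj : Function.Injective φ)
    (hadj : ∀ a b, G.Adj a b → G'.Adj (φ a) (φ b)) :
    ContainsK33 G → ContainsK33 G' := by
  rintro ⟨f, finj, fadj⟩
  exact ⟨φ ∘ f, hinj.comp finj, fun a b h => hadj _ _ (fadj a b h)⟩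

end K33Aux

theorem stmt_6 (n : ℕ) (hn : 12 ≤ n) :
    ∃ G : SimpleGraph (Fin n), K33Saturated G ∧ G.edgeSet.ncard ≤ 3 * n - 9 := by
  obtain ⟨k, rfl⟩ := Nat.exists_eq_add_of_le hn
  have hcard : Fintype.card (K33Aux.Wk k) = 12 + k := by
    simp only [Fintype.card_sum, Fintype.card_fin, ZMod.card]
    omega
  let e : K33Aux.Wk k ≃ Fin (12 + k) := (Fintype.equivFin (K33Aux.Wk k)).trans (finCongr hcard)
  refine ⟨SimpleGraph.comap (⇑e.symm) (K33Aux.GG k), ⟨?_, ?_⟩, ?_⟩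
  · -- K33-free
    intro h
    apply K33Aux.freeGG (k := k)
    exact K33Aux.containsK33_map (⇑e.symm) e.symm.injective (fun a b h' => h') h
  · -- saturated
    intro x y hxy hnadj
    have h1 : e.symm x ≠ e.symm y := fun h => hxy (e.symm.injective h)
    have h2 : ¬ (K33Aux.GG k).Adj (e.symm x) (e.symm y) := hnadj
    have h3 := K33Aux.satGG (e.symm x) (e.symm y) h1 h2
    apply K33Aux.containsK33_map (⇑e) e.injective ?_ h3
    intro a b hab
    rw [SimpleGraph.sup_adj] at hab ⊢
    rcases hab with hab | hab
    · left
      show (K33Aux.GG k).Adj (e.symm (e a)) (e.symm (e b))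
      simpa using hab
    · right
      rw [SimpleGraph.edge_adj] at hab ⊢
      obtain ⟨hor, hne⟩ := hab
      refine ⟨?_, fun h => hne (e.injective h)⟩
      rcases hor with ⟨rfl, rfl⟩ | ⟨rfl, rfl⟩
      · exact Or.inl ⟨by simp, by simp⟩
      · exact Or.inr ⟨by simp, by simp⟩
  · -- edge count
    have hsub : (SimpleGraph.comap (⇑e.symm) (K33Aux.GG k)).edgeSet ⊆
        Sym2.map (⇑e) '' (K33Aux.GG k).edgeSet := by
      intro ed hed
      induction ed with
      | _ x y =>
        rw [SimpleGraph.mem_edgeSet] at hed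
        refine ⟨s(e.symm x, e.symm y), (SimpleGraph.mem_edgeSet _).mpr hed, ?_⟩
        rw [Sym2.map_pair_eq]
        simp
    calc (SimpleGraph.comap (⇑e.symm) (K33Aux.GG k)).edgeSet.ncard
        ≤ (Sym2.map (⇑e) '' (K33Aux.GG k).edgeSet).ncard :=
          Set.ncard_le_ncard hsub (Set.toFinite _)
    _ ≤ (K33Aux.GG k).edgeSet.ncard := Set.ncard_image_le (Set.toFinite _)
    _ ≤ 3 * k + 27 := K33Aux.count_GG k
    _ ≤ 3 * (12 + k) - 9 := by omega
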